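/- For every x = (x₁, x₂) ∈ ℝ² the identity ∇H(x) · (Dξ(x)ξ(x)) = H(x) · Λ(x) holds, where Λ(x) = 2 h₁'(x₁)² h₂'(x₂)² − h₁'(x₁)² h₂(x₂)h₂''(x₂) − h₁(x₁)h₁''(x₁) h₂'(x₂)². -/

import Mathlib

noncomputable section

/-- The factorized Hamiltonian `H(x₁,x₂) = h₁(x₁)·h₂(x₂)`. -/
def Ham (h₁ h₂ : ℝ → ℝ) : ℝ × ℝ → ℝ := fun x => h₁ x.1 * h₂ x.2

/-- The Hamiltonian vector field `ξ = ∇⊥H = (−h₁h₂', h₁'h₂)`. -/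
def xiField (h₁ h₂ : ℝ → ℝ) : ℝ × ℝ → ℝ × ℝ :=
  fun x => (-(h₁ x.1 * deriv h₂ x.2), deriv h₁ x.1 * h₂ x.2)

/-- Euclidean scalar product on `ℝ²`. -/
def dotR2 (a b : ℝ × ℝ) : ℝ := a.1 * b.1 + a.2 * b.2

/-- The gradient of a scalar function on `ℝ²`. -/
def gradR2 (f : ℝ × ℝ → ℝ) (x : ℝ × ℝ) : ℝ × ℝ :=
  (fderiv ℝ f x (1, 0), fderiv ℝ f x (0, 1))

/-- The function `Λ = 2(h₁')²(h₂')² − (h₁')²h₂h₂'' − h₁h₁''(h₂')²`. -/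
def LambdaFn (h₁ h₂ : ℝ → ℝ) : ℝ × ℝ → ℝ := fun x =>
  2 * (deriv h₁ x.1) ^ 2 * (deriv h₂ x.2) ^ 2 -
    (deriv h₁ x.1) ^ 2 * (h₂ x.2 * deriv (deriv h₂) x.2) -
    (h₁ x.1 * deriv (deriv h₁) x.1) * (deriv h₂ x.2) ^ 2

/-- The fundamental algebraic identity `∇H · (Dξ ξ) = H Λ`. -/
theorem gradH_dot_acceleration
    (h₁ h₂ : ℝ → ℝ)
    (hreg₁ : ContDiff ℝ 3 h₁) (hreg₂ : ContDiff ℝ 3 h₂) :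
    ∀ x : ℝ × ℝ,
      dotR2 (gradR2 (Ham h₁ h₂) x) (fderiv ℝ (xiField h₁ h₂) x (xiField h₁ h₂ x)) =
        Ham h₁ h₂ x * LambdaFn h₁ h₂ x := by
  have h3 : ((3:ℕ):ℕ∞) = 2 + 1 := by norm_num
  have hd1 : Differentiable ℝ h₁ := hreg₁.differentiable (by norm_num)
  have hd2 : Differentiable ℝ h₂ := hreg₂.differentiable (by norm_num)
  have h31 : ContDiff ℝ (2+1) h₁ := hreg₁.of_le (by norm_num)
  have h32 : ContDiff ℝ (2+1) h₂ := hreg₂.of_le (by norm_num)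
  have hc1' : ContDiff ℝ 2 (deriv h₁) := (contDiff_succ_iff_deriv.mp h31).2.2
  have hc2' : ContDiff ℝ 2 (deriv h₂) := (contDiff_succ_iff_deriv.mp h32).2.2
  have hd1' : Differentiable ℝ (deriv h₁) := hc1'.differentiable (by norm_num)
  have hd2' : Differentiable ℝ (deriv h₂) := hc2'.differentiable (by norm_num)
  intro x
  have A1 : HasFDerivAt (fun p : ℝ × ℝ => h₁ p.1)
      ((ContinuousLinearMap.smulRight (1 : ℝ →L[ℝ] ℝ) (deriv h₁ x.1)).comp
        (ContinuousLinearMap.fst ℝ ℝ ℝ)) x :=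
    ((hd1 x.1).hasDerivAt.hasFDerivAt).comp x hasFDerivAt_fst
  have A2 : HasFDerivAt (fun p : ℝ × ℝ => h₂ p.2)
      ((ContinuousLinearMap.smulRight (1 : ℝ →L[ℝ] ℝ) (deriv h₂ x.2)).comp
        (ContinuousLinearMap.snd ℝ ℝ ℝ)) x :=
    ((hd2 x.2).hasDerivAt.hasFDerivAt).comp x hasFDerivAt_snd
  have B1 : HasFDerivAt (fun p : ℝ × ℝ => deriv h₁ p.1)
      ((ContinuousLinearMap.smulRight (1 : ℝ →L[ℝ] ℝ) (deriv (deriv h₁) x.1)).comp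
        (ContinuousLinearMap.fst ℝ ℝ ℝ)) x :=
    ((hd1' x.1).hasDerivAt.hasFDerivAt).comp x hasFDerivAt_fst
  have B2 : HasFDerivAt (fun p : ℝ × ℝ => deriv h₂ p.2)
      ((ContinuousLinearMap.smulRight (1 : ℝ →L[ℝ] ℝ) (deriv (deriv h₂) x.2)).comp
        (ContinuousLinearMap.snd ℝ ℝ ℝ)) x :=
    ((hd2' x.2).hasDerivAt.hasFDerivAt).comp x hasFDerivAt_snd
  have FH : HasFDerivAt (Ham h₁ h₂) _ x := A1.mul A2
  have FX : HasFDerivAt (xiField h₁ h₂) _ x := HasFDerivAt.prodMk ((A1.mul B2).neg) (B1.mul A2)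
  rw [gradR2, FH.fderiv, FX.fderiv]
  simp only [dotR2, Ham, xiField, LambdaFn, ContinuousLinearMap.add_apply,
    ContinuousLinearMap.smul_apply, ContinuousLinearMap.comp_apply,
    ContinuousLinearMap.smulRight_apply, ContinuousLinearMap.one_apply,
    ContinuousLinearMap.coe_fst', ContinuousLinearMap.coe_snd',
    ContinuousLinearMap.prod_apply, ContinuousLinearMap.neg_apply, smul_eq_mul]
  ring
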